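/- arXiv:2601.12299 — 5 statements merged into one kernel-verified Lean document; each statement's English description precedes it below -/
import Mathlib

section
/- Let R be a commutative ring and A a commutative R-algebra. Let V and W be integral domains which are valuation rings, each equipped with an R-algebra structure, and let f : A →+* FractionRing V and g : A →+* FractionRing W be ring homomorphisms commuting with the structure maps from R (where the fraction fields carry the R-algebra structures through V and W). Write v_f := (ValuationRing.valuation V (FractionRing V)).comap f and v_g := (ValuationRing.valuation W (FractionRing W)).comap g for the induced valuations on A. Then v_f and v_g are equivalent valuations (Valuation.IsEquiv) if and only if there exist: an integral domain U which is a valuation ring with an R-algebra structure; a ring homomorphism h : A →+* FractionRing U commuting with the structure maps from R; injective local ring homomorphisms α : U →+* V and β : U →+* W commuting with the structure maps from R; and ring homomorphisms α̂ : FractionRing U →+* FractionRing V and β̂ : FractionRing U →+* FractionRing W satisfying α̂ ∘ algebraMap U (FractionRing U) = algebraMap V (FractionRing V) ∘ α and β̂ ∘ algebraMap U (FractionRing U) = algebraMap W (FractionRing W) ∘ β, such that α̂ ∘ h = f and β̂ ∘ h = g. -/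
set_option maxHeartbeats 1000000
set_option linter.unusedSectionVars false

universe u

/-- The data witnessing that two pairs `(V, f)` and `(W, g)` of valuation rings over `R`
together with `R`-algebra maps from `A` to their fraction fields are equivalent: a common
refinement `(U, h)` dominating both via injective local homomorphisms of valuation rings over
`R`, together with the induced maps on fraction fields. -/
structure CommonRefinement (R A V W : Type u) [CommRing R] [CommRing A] [Algebra R A]
    [CommRing V] [IsDomain V] [ValuationRing V] [Algebra R V]
    [CommRing W] [IsDomain W] [ValuationRing W] [Algebra R W]
    (f : A →+* FractionRing V) (g : A →+* FractionRing W) : Type (u + 1) where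
  U : Type u
  [commRingU : CommRing U]
  [isDomainU : IsDomain U]
  [valuationRingU : ValuationRing U]
  [algebraU : Algebra R U]
  h : A →+* FractionRing U
  h_compat : h.comp (algebraMap R A) =
    (algebraMap U (FractionRing U)).comp (algebraMap R U)
  α : U →+* V
  β : U →+* W
  α_injective : Function.Injective α
  β_injective : Function.Injective β
  α_local : IsLocalHom α
  β_local : IsLocalHom β
  α_compat : α.comp (algebraMap R U) = algebraMap R V
  β_compat : β.comp (algebraMap R U) = algebraMap R W
  αhat : FractionRing U →+* FractionRing V
  βhat : FractionRing U →+* FractionRing W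
  αhat_compat : αhat.comp (algebraMap U (FractionRing U)) =
    (algebraMap V (FractionRing V)).comp α
  βhat_compat : βhat.comp (algebraMap U (FractionRing U)) =
    (algebraMap W (FractionRing W)).comp β
  αhat_h : αhat.comp h = f
  βhat_h : βhat.comp h = g

open ValuationRing

/-- For a valuation ring `B`, an element of the fraction field has valuation at most one iff
it comes from `B`. -/
theorem val_le_one_iff_exists {B : Type u} [CommRing B] [IsDomain B] [ValuationRing B]
    (y : FractionRing B) :
    ValuationRing.valuation B (FractionRing B) y ≤ 1 ↔
      ∃ s : B, algebraMap B (FractionRing B) s = y :=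
  (Valuation.mem_integer_iff _ _).symm.trans (ValuationRing.mem_integer_iff B (FractionRing B) y)

section Backward

variable {U V : Type u} [CommRing U] [IsDomain U] [ValuationRing U]
  [CommRing V] [IsDomain V] [ValuationRing V]

/-- If `α : U →+* V` is a local homomorphism of valuation rings, inducing
`αhat` on fraction fields, then the valuation of `V` pulled back along `αhat` is
equivalent to the valuation of `U`. -/
theorem aux_isEquiv_comap (α : U →+* V) (hloc : IsLocalHom α)
    (αhat : FractionRing U →+* FractionRing V)
    (hcompat : αhat.comp (algebraMap U (FractionRing U)) =
      (algebraMap V (FractionRing V)).comp α) :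
    ((ValuationRing.valuation V (FractionRing V)).comap αhat).IsEquiv
      (ValuationRing.valuation U (FractionRing U)) := by
  have hcompat' : ∀ s : U, αhat (algebraMap U (FractionRing U) s)
      = algebraMap V (FractionRing V) (α s) := fun s => RingHom.congr_fun hcompat s
  apply Valuation.isEquiv_of_val_le_one
  intro x
  rw [Valuation.comap_apply]
  constructor
  · intro hx
    by_contra hle
    have hx0 : x ≠ 0 := by
      rintro rfl
      exact hle (by rw [map_zero]; exact zero_le_one)
    have hαx0 : αhat x ≠ 0 := fun h0 => hx0 (αhat.injective (by rw [h0, map_zero]))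
    have hxinv : ValuationRing.valuation U (FractionRing U) x⁻¹ ≤ 1 := by
      rw [map_inv₀]
      exact (inv_le_one₀ (zero_lt_iff.mpr
        ((Valuation.ne_zero_iff _).mpr hx0))).mpr (le_of_not_ge hle)
    obtain ⟨s, hs⟩ := (val_le_one_iff_exists _).mp hxinv
    have hsnu : ¬ IsUnit s := by
      intro hu
      obtain ⟨t, ht⟩ := isUnit_iff_exists_inv.mp hu
      have hxt : algebraMap U (FractionRing U) t = x := by
        have h1 : x⁻¹ * algebraMap U (FractionRing U) t = 1 := by
          rw [← hs, ← map_mul, ht, map_one]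
        calc algebraMap U (FractionRing U) t
            = x * (x⁻¹ * algebraMap U (FractionRing U) t) := by
              rw [← mul_assoc, mul_inv_cancel₀ hx0, one_mul]
          _ = x := by rw [h1, mul_one]
      exact hle ((val_le_one_iff_exists _).mpr ⟨t, hxt⟩)
    obtain ⟨c, hc⟩ := (val_le_one_iff_exists _).mp hx
    have hαinv : αhat x⁻¹ = algebraMap V (FractionRing V) (α s) := by
      rw [← hcompat', hs]
    have hcs : c * α s = 1 := by
      apply IsFractionRing.injective V (FractionRing V)
      rw [map_mul, map_one, hc, ← hαinv, map_inv₀, mul_inv_cancel₀ hαx0]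
    exact hsnu (hloc.map_nonunit s (IsUnit.of_mul_eq_one _ (mul_comm c (α s) ▸ hcs)))
  · intro hx
    obtain ⟨s, hs⟩ := (val_le_one_iff_exists _).mp hx
    refine (val_le_one_iff_exists _).mpr ⟨α s, ?_⟩
    rw [← hcompat', hs]

end Backward

section Forward

variable {A V : Type u} [CommRing A] [CommRing V] [IsDomain V] [ValuationRing V]
  (f : A →+* FractionRing V)

/-- The subring of `V` of elements expressible as a fraction `f a / f b` of
elements in the image of `f`. -/
def refSubring : Subring V where
  carrier := {u : V | ∃ a b : A, f b ≠ 0 ∧ algebraMap V (FractionRing V) u * f b = f a}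
  one_mem' := ⟨1, 1, by simp, by simp⟩
  zero_mem' := ⟨0, 1, by simp, by simp⟩
  mul_mem' := by
    rintro x y ⟨a, b, hb, hx⟩ ⟨a', b', hb', hy⟩
    refine ⟨a * a', b * b', by simp [hb, hb'], ?_⟩
    have h : algebraMap V (FractionRing V) (x * y) * f (b * b') =
        (algebraMap V (FractionRing V) x * f b) * (algebraMap V (FractionRing V) y * f b') := by
      rw [map_mul, map_mul]; ring
    rw [h, hx, hy, ← map_mul]
  add_mem' := by
    rintro x y ⟨a, b, hb, hx⟩ ⟨a', b', hb', hy⟩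
    refine ⟨a * b' + a' * b, b * b', by simp [hb, hb'], ?_⟩
    have h : algebraMap V (FractionRing V) (x + y) * f (b * b') =
        (algebraMap V (FractionRing V) x * f b) * f b' +
          (algebraMap V (FractionRing V) y * f b') * f b := by
      rw [map_add, map_mul]; ring
    rw [h, hx, hy, ← map_mul, ← map_mul, ← map_add]
  neg_mem' := by
    rintro x ⟨a, b, hb, hx⟩
    exact ⟨-a, b, hb, by rw [map_neg, map_neg, neg_mul, hx]⟩

theorem mem_refSubring {u : V} :
    u ∈ refSubring f ↔ ∃ a b : A, f b ≠ 0 ∧ algebraMap V (FractionRing V) u * f b = f a :=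
  Iff.rfl

theorem refSubring_exists_mul_eq {x y : ↥(refSubring f)}
    (h : ValuationRing.valuation V (FractionRing V) (algebraMap V (FractionRing V) (x : V)) ≤
      ValuationRing.valuation V (FractionRing V) (algebraMap V (FractionRing V) (y : V))) :
    ∃ c : ↥(refSubring f), y * c = x := by
  obtain ⟨a₁, b₁, hb₁, hx⟩ := (mem_refSubring f).mp x.2
  obtain ⟨a₂, b₂, hb₂, hy⟩ := (mem_refSubring f).mp y.2
  by_cases hy0 : (y : V) = 0
  · have hx0 : (x : V) = 0 := by
      rw [hy0, map_zero, map_zero, le_zero_iff, Valuation.zero_iff] at h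
      exact IsFractionRing.injective V (FractionRing V) (by rw [h, map_zero])
    refine ⟨1, Subtype.ext ?_⟩
    push_cast
    rw [mul_one, hy0, hx0]
  · have halgy : algebraMap V (FractionRing V) (y : V) ≠ 0 :=
      fun h0 => hy0 (IsFractionRing.injective V (FractionRing V) (by rw [h0, map_zero]))
    have hle1 : ValuationRing.valuation V (FractionRing V)
        (algebraMap V (FractionRing V) (x : V) / algebraMap V (FractionRing V) (y : V)) ≤ 1 := by
      rw [map_div₀, div_le_one₀ (zero_lt_iff.mpr ((Valuation.ne_zero_iff _).mpr halgy))]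
      exact h
    obtain ⟨s, hs⟩ := (val_le_one_iff_exists _).mp hle1
    have ht : algebraMap V (FractionRing V) s * algebraMap V (FractionRing V) (y : V) =
        algebraMap V (FractionRing V) (x : V) := by
      rw [hs, div_mul_cancel₀ _ halgy]
    have hfa₂ : f a₂ ≠ 0 := by
      rw [← hy]; exact mul_ne_zero halgy hb₂
    have hmem : s ∈ refSubring f := by
      refine ⟨a₁ * b₂, a₂ * b₁, by rw [map_mul]; exact mul_ne_zero hfa₂ hb₁, ?_⟩
      rw [map_mul, map_mul]
      calc algebraMap V (FractionRing V) s * (f a₂ * f b₁)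
          = algebraMap V (FractionRing V) s *
            ((algebraMap V (FractionRing V) (y : V) * f b₂) * f b₁) := by rw [hy]
        _ = (algebraMap V (FractionRing V) s * algebraMap V (FractionRing V) (y : V)) *
            f b₁ * f b₂ := by ring
        _ = (algebraMap V (FractionRing V) (x : V) * f b₁) * f b₂ := by rw [ht]
        _ = f a₁ * f b₂ := by rw [hx]
    refine ⟨⟨s, hmem⟩, Subtype.ext ?_⟩
    apply IsFractionRing.injective V (FractionRing V)
    show algebraMap V (FractionRing V) ((y : V) * s) = algebraMap V (FractionRing V) (x : V)
    rw [map_mul, mul_comm, ht]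

theorem refSubring_valuationRing : ValuationRing ↥(refSubring f) := by
  have cond : ∀ x y : ↥(refSubring f), ∃ c, x * c = y ∨ y * c = x := by
    intro x y
    rcases le_total
        (ValuationRing.valuation V (FractionRing V) (algebraMap V (FractionRing V) (y : V)))
        (ValuationRing.valuation V (FractionRing V) (algebraMap V (FractionRing V) (x : V)))
      with h | h
    · obtain ⟨c, hc⟩ := refSubring_exists_mul_eq f h
      exact ⟨c, Or.inl hc⟩
    · obtain ⟨c, hc⟩ := refSubring_exists_mul_eq f h
      exact ⟨c, Or.inr hc⟩
  exact { toPreValuationRing := ⟨cond⟩ }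

theorem refSubring_subtype_isLocalHom : IsLocalHom (refSubring f).subtype := by
  constructor
  intro s hs
  obtain ⟨a, b, hb, hsab⟩ := (mem_refSubring f).mp s.2
  obtain ⟨t, ht'⟩ := isUnit_iff_exists_inv.mp hs
  have ht : (s : V) * t = 1 := ht'
  have hs0 : (s : V) ≠ 0 := fun h0 => by rw [h0, zero_mul] at ht; exact zero_ne_one ht
  have hsV : algebraMap V (FractionRing V) (s : V) ≠ 0 :=
    fun h0 => hs0 (IsFractionRing.injective V (FractionRing V) (by rw [h0, map_zero]))
  have hfa : f a ≠ 0 := by rw [← hsab]; exact mul_ne_zero hsV hb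
  have h1 : algebraMap V (FractionRing V) (s : V) *
      algebraMap V (FractionRing V) t = 1 := by rw [← map_mul, ht, map_one]
  have htmem : t ∈ refSubring f := by
    refine ⟨b, a, hfa, ?_⟩
    calc algebraMap V (FractionRing V) t * f a
        = algebraMap V (FractionRing V) t *
          (algebraMap V (FractionRing V) (s : V) * f b) := by rw [hsab]
      _ = (algebraMap V (FractionRing V) (s : V) *
          algebraMap V (FractionRing V) t) * f b := by ring
      _ = f b := by rw [h1, one_mul]
  exact isUnit_iff_exists_inv.mpr ⟨⟨t, htmem⟩, Subtype.ext ht⟩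

/-- The induced map on fraction fields from the inclusion `refSubring f ⊆ V`. -/
noncomputable def refLift : FractionRing ↥(refSubring f) →+* FractionRing V :=
  IsFractionRing.lift (g := (algebraMap V (FractionRing V)).comp (refSubring f).subtype)
    (by
      rw [RingHom.coe_comp]
      exact (IsFractionRing.injective V (FractionRing V)).comp Subtype.coe_injective)

theorem refLift_algebraMap (s : ↥(refSubring f)) :
    refLift f (algebraMap ↥(refSubring f) (FractionRing ↥(refSubring f)) s) =
      algebraMap V (FractionRing V) (s : V) :=
  IsFractionRing.lift_algebraMap _ _

theorem exists_refLift_eq (a : A) : ∃ y, refLift f y = f a := by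
  by_cases hle : ValuationRing.valuation V (FractionRing V) (f a) ≤ 1
  · obtain ⟨s, hs⟩ := (val_le_one_iff_exists _).mp hle
    have hmem : s ∈ refSubring f := ⟨a, 1, by simp, by rw [map_one, mul_one, hs]⟩
    exact ⟨algebraMap _ _ (⟨s, hmem⟩ : ↥(refSubring f)), by rw [refLift_algebraMap]; exact hs⟩
  · have hne : f a ≠ 0 := by
      intro h0
      exact hle (by rw [h0, map_zero]; exact zero_le_one)
    have hlt : ValuationRing.valuation V (FractionRing V) (f a)⁻¹ ≤ 1 := by
      rw [map_inv₀]
      exact (inv_le_one₀ (zero_lt_iff.mpr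
        ((Valuation.ne_zero_iff _).mpr hne))).mpr (le_of_not_ge hle)
    obtain ⟨s, hs⟩ := (val_le_one_iff_exists _).mp hlt
    have hmem : s ∈ refSubring f := ⟨1, a, hne, by rw [hs, map_one, inv_mul_cancel₀ hne]⟩
    refine ⟨(algebraMap _ _ (⟨s, hmem⟩ : ↥(refSubring f)))⁻¹, ?_⟩
    rw [map_inv₀, refLift_algebraMap]
    show (algebraMap V (FractionRing V) s)⁻¹ = f a
    rw [hs, inv_inv]

/-- The map `A →+* FractionRing (refSubring f)` through which `f` factors. -/
noncomputable def refh : A →+* FractionRing ↥(refSubring f) where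
  toFun a := (exists_refLift_eq f a).choose
  map_one' := (refLift f).injective (by
    rw [(exists_refLift_eq f 1).choose_spec, map_one, map_one])
  map_mul' a b := (refLift f).injective (by
    rw [map_mul (refLift f), (exists_refLift_eq f (a * b)).choose_spec, (exists_refLift_eq f a).choose_spec,
      (exists_refLift_eq f b).choose_spec, map_mul])
  map_zero' := (refLift f).injective (by
    rw [(exists_refLift_eq f 0).choose_spec, map_zero, map_zero])
  map_add' a b := (refLift f).injective (by
    rw [RingHom.map_add (refLift f), (exists_refLift_eq f (a + b)).choose_spec,
      (exists_refLift_eq f a).choose_spec,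
      (exists_refLift_eq f b).choose_spec, RingHom.map_add f])

theorem refLift_refh (a : A) : refLift f (refh f a) = f a := (exists_refLift_eq f a).choose_spec

theorem refLift_comp_refh : (refLift f).comp (refh f) = f := RingHom.ext (refLift_refh f)

end Forward

/-- Two pairs `(V, f)` and `(W, g)` of valuation rings over `R` with `R`-algebra homomorphisms
`f : A →+* Frac V`, `g : A →+* Frac W` induce equivalent valuations on `A` if and only if they
admit a common refinement by a valuation ring `U` over `R` mapping to both `V` and `W` by
injective local homomorphisms. -/
theorem valuation_comap_isEquiv_iff_nonempty_commonRefinement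
    {R A V W : Type u} [CommRing R] [CommRing A] [Algebra R A]
    [CommRing V] [IsDomain V] [ValuationRing V] [Algebra R V]
    [CommRing W] [IsDomain W] [ValuationRing W] [Algebra R W]
    (f : A →+* FractionRing V) (g : A →+* FractionRing W)
    (hf : f.comp (algebraMap R A) = (algebraMap V (FractionRing V)).comp (algebraMap R V))
    (hg : g.comp (algebraMap R A) = (algebraMap W (FractionRing W)).comp (algebraMap R W)) :
    ((ValuationRing.valuation V (FractionRing V)).comap f).IsEquiv
      ((ValuationRing.valuation W (FractionRing W)).comap g) ↔
    Nonempty (CommonRefinement R A V W f g) := by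
  constructor
  · intro hequiv
    haveI : ValuationRing ↥(refSubring f) := refSubring_valuationRing f
    have hmemR : ∀ r : R, algebraMap R V r ∈ refSubring f := fun r =>
      ⟨algebraMap R A r, 1, by rw [map_one]; exact one_ne_zero, by
        rw [map_one, mul_one]; exact (RingHom.congr_fun hf r).symm⟩
    letI : Algebra R ↥(refSubring f) :=
      ((algebraMap R V).codRestrict (refSubring f) hmemR).toAlgebra
    have hle : ∀ a b : A,
        ValuationRing.valuation V (FractionRing V) (f a) ≤
          ValuationRing.valuation V (FractionRing V) (f b) ↔
        ValuationRing.valuation W (FractionRing W) (g a) ≤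
          ValuationRing.valuation W (FractionRing W) (g b) := fun a b => hequiv a b
    have hker : ∀ a : A, f a = 0 ↔ g a = 0 := by
      intro a
      have h0 := hle a 0
      simp only [map_zero, le_zero_iff, Valuation.zero_iff] at h0
      exact h0
    have hfg : ∀ a b : A, f a = f b → g a = g b := by
      intro a b hab
      have h1 : f (a - b) = 0 := by rw [map_sub, hab, sub_self]
      have h2 := (hker _).mp h1
      rw [map_sub, sub_eq_zero] at h2
      exact h2
    have wit : ∀ u : ↥(refSubring f), ∃ q : A × A, f q.2 ≠ 0 ∧
        algebraMap V (FractionRing V) (u : V) * f q.2 = f q.1 := fun u => by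
      obtain ⟨a, b, h1, h2⟩ := (mem_refSubring f).mp u.2
      exact ⟨(a, b), h1, h2⟩
    choose p hp1 hp2 using wit
    have hgb : ∀ u, g (p u).2 ≠ 0 := fun u h0 => hp1 u ((hker _).mpr h0)
    set Φ : ↥(refSubring f) → FractionRing W := fun u => g (p u).1 / g (p u).2 with hΦdef
    have Φspec : ∀ (u : ↥(refSubring f)) (a b : A), f b ≠ 0 →
        algebraMap V (FractionRing V) (u : V) * f b = f a → Φ u * g b = g a := by
      intro u a b hb h
      have hfeq : f ((p u).1 * b) = f (a * (p u).2) := by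
        rw [map_mul, map_mul, ← h, ← hp2 u]; ring
      have hgeq := hfg _ _ hfeq
      rw [map_mul, map_mul] at hgeq
      show g (p u).1 / g (p u).2 * g b = g a
      rw [div_mul_eq_mul_div, div_eq_iff (hgb u)]
      exact hgeq
    have hΦr : ∀ u : ↥(refSubring f), Φ u * g (p u).2 = g (p u).1 := fun u => by
      simp only [hΦdef]; exact div_mul_cancel₀ _ (hgb u)
    have Φzero : ∀ u : ↥(refSubring f), Φ u = 0 → u = 0 := by
      intro u h0
      rw [hΦdef] at h0
      have hga : g (p u).1 = 0 := by
        rcases div_eq_zero_iff.mp h0 with h | h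
        · exact h
        · exact absurd h (hgb u)
      have hfa : f (p u).1 = 0 := (hker _).mpr hga
      have h2 := hp2 u
      rw [hfa] at h2
      rcases mul_eq_zero.mp h2 with h | h
      · exact Subtype.ext (IsFractionRing.injective V (FractionRing V) (by simp [h]))
      · exact absurd h (hp1 u)
    have Φint : ∀ u : ↥(refSubring f), ∃ s : W, algebraMap W (FractionRing W) s = Φ u := by
      intro u
      refine (val_le_one_iff_exists (Φ u)).mp ?_
      have hless : ValuationRing.valuation V (FractionRing V) (f (p u).1) ≤
          ValuationRing.valuation V (FractionRing V) (f (p u).2) := by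
        rw [← hp2 u, map_mul]
        exact mul_le_of_le_one_left' ((val_le_one_iff_exists _).mpr ⟨(u : V), rfl⟩)
      have h2 := (hle _ _).mp hless
      simp only [hΦdef]
      rw [map_div₀, div_le_one₀ (zero_lt_iff.mpr ((Valuation.ne_zero_iff _).mpr (hgb u)))]
      exact h2
    choose βf hβf using Φint
    have Φ1 : Φ 1 = 1 := by
      have h := Φspec 1 1 1 (by simp) (by simp)
      rw [RingHom.map_one g, mul_one] at h
      rw [h]
    have Φ0 : Φ 0 = 0 := by
      have h := Φspec 0 0 1 (by simp) (by simp)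
      rw [RingHom.map_one g, mul_one] at h
      rw [h, RingHom.map_zero g]
    have Φmul : ∀ u u' : ↥(refSubring f), Φ (u * u') = Φ u * Φ u' := by
      intro u u'
      have hwit : algebraMap V (FractionRing V) ((u * u' : ↥(refSubring f)) : V) *
          f ((p u).2 * (p u').2) = f ((p u).1 * (p u').1) := by
        have hco : ((u * u' : ↥(refSubring f)) : V) = (u : V) * (u' : V) := rfl
        rw [hco, map_mul, map_mul, map_mul]
        calc algebraMap V (FractionRing V) (u : V) * algebraMap V (FractionRing V) (u' : V) *
            (f (p u).2 * f (p u').2)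
            = (algebraMap V (FractionRing V) (u : V) * f (p u).2) *
              (algebraMap V (FractionRing V) (u' : V) * f (p u').2) := by ring
          _ = f (p u).1 * f (p u').1 := by rw [hp2 u, hp2 u']
      have h := Φspec (u * u') ((p u).1 * (p u').1) ((p u).2 * (p u').2)
        (by rw [map_mul]; exact mul_ne_zero (hp1 u) (hp1 u')) hwit
      rw [map_mul, map_mul] at h
      have hc : Φ (u * u') * (g (p u).2 * g (p u').2) =
          (Φ u * Φ u') * (g (p u).2 * g (p u').2) := by
        calc Φ (u * u') * (g (p u).2 * g (p u').2) = g (p u).1 * g (p u').1 := h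
          _ = (Φ u * g (p u).2) * (Φ u' * g (p u').2) := by rw [hΦr u, hΦr u']
          _ = (Φ u * Φ u') * (g (p u).2 * g (p u').2) := by ring
      exact mul_right_cancel₀ (mul_ne_zero (hgb u) (hgb u')) hc
    have Φadd : ∀ u u' : ↥(refSubring f), Φ (u + u') = Φ u + Φ u' := by
      intro u u'
      have hwit : algebraMap V (FractionRing V) ((u + u' : ↥(refSubring f)) : V) *
          f ((p u).2 * (p u').2) = f ((p u).1 * (p u').2 + (p u').1 * (p u).2) := by
        have hco : ((u + u' : ↥(refSubring f)) : V) = (u : V) + (u' : V) := rfl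
        rw [hco, map_add, map_mul, map_add, map_mul, map_mul]
        calc (algebraMap V (FractionRing V) (u : V) + algebraMap V (FractionRing V) (u' : V)) *
            (f (p u).2 * f (p u').2)
            = (algebraMap V (FractionRing V) (u : V) * f (p u).2) * f (p u').2 +
              (algebraMap V (FractionRing V) (u' : V) * f (p u').2) * f (p u).2 := by ring
          _ = f (p u).1 * f (p u').2 + f (p u').1 * f (p u).2 := by rw [hp2 u, hp2 u']
      have h := Φspec (u + u') ((p u).1 * (p u').2 + (p u').1 * (p u).2)
        ((p u).2 * (p u').2)
        (by rw [map_mul]; exact mul_ne_zero (hp1 u) (hp1 u')) hwit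
      rw [map_mul, map_add, map_mul, map_mul] at h
      have hc : Φ (u + u') * (g (p u).2 * g (p u').2) =
          (Φ u + Φ u') * (g (p u).2 * g (p u').2) := by
        calc Φ (u + u') * (g (p u).2 * g (p u').2)
            = g (p u).1 * g (p u').2 + g (p u').1 * g (p u).2 := h
          _ = (Φ u * g (p u).2) * g (p u').2 + (Φ u' * g (p u').2) * g (p u).2 := by
              rw [hΦr u, hΦr u']
          _ = (Φ u + Φ u') * (g (p u).2 * g (p u').2) := by ring
      exact mul_right_cancel₀ (mul_ne_zero (hgb u) (hgb u')) hc
    have injW := IsFractionRing.injective W (FractionRing W)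
    obtain ⟨β, hβ⟩ : ∃ β : ↥(refSubring f) →+* W,
        ∀ u, algebraMap W (FractionRing W) (β u) = Φ u :=
      ⟨{ toFun := βf
         map_one' := injW (by simp only [hβf, Φ1, map_one])
         map_mul' := fun u u' => injW (by simp only [map_mul, hβf, Φmul])
         map_zero' := injW (by simp only [hβf, Φ0, map_zero])
         map_add' := fun u u' => injW (by simp only [map_add, hβf, Φadd]) }, hβf⟩
    have hβinj : Function.Injective β := by
      rw [injective_iff_map_eq_zero]
      intro u hu
      exact Φzero u (by rw [← hβ u, hu, map_zero])
    have hβlocal : IsLocalHom β := by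
      constructor
      intro u hu
      obtain ⟨c, hc⟩ := isUnit_iff_exists_inv.mp hu
      have hΦne : Φ u ≠ 0 := by
        intro h0
        have h1 : β u = 0 := injW (by rw [hβ u, h0, map_zero])
        rw [h1, zero_mul] at hc
        exact zero_ne_one hc
      have hga : g (p u).1 ≠ 0 := by
        intro h0
        apply hΦne
        simp only [hΦdef]
        rw [h0, zero_div]
      have hfa : f (p u).1 ≠ 0 := fun h0 => hga ((hker _).mp h0)
      have halgu : algebraMap V (FractionRing V) (u : V) ≠ 0 := by
        intro h0
        apply hfa
        rw [← hp2 u, h0, zero_mul]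
      have hinvf : (algebraMap V (FractionRing V) (u : V))⁻¹ * f (p u).1 = f (p u).2 := by
        rw [← hp2 u, inv_mul_cancel_left₀ halgu]
      have h1 : Φ u * algebraMap W (FractionRing W) c = 1 := by
        rw [← hβ u, ← map_mul, hc, map_one]
      have hinvΦ : (Φ u)⁻¹ = algebraMap W (FractionRing W) c := inv_eq_of_mul_eq_one_right h1
      have h2 : ValuationRing.valuation W (FractionRing W) (g (p u).2) ≤
          ValuationRing.valuation W (FractionRing W) (g (p u).1) := by
        have h3 : ValuationRing.valuation W (FractionRing W) (g (p u).2 / g (p u).1) ≤ 1 := by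
          have he : g (p u).2 / g (p u).1 = (Φ u)⁻¹ := by
            simp only [hΦdef]
            rw [inv_div]
          rw [he, hinvΦ]
          exact (val_le_one_iff_exists _).mpr ⟨c, rfl⟩
        rwa [map_div₀, div_le_one₀ (zero_lt_iff.mpr ((Valuation.ne_zero_iff _).mpr hga))] at h3
      have h3 := (hle _ _).mpr h2
      have hval : ValuationRing.valuation V (FractionRing V)
          ((algebraMap V (FractionRing V) (u : V))⁻¹) ≤ 1 := by
        have heq2 : (algebraMap V (FractionRing V) (u : V))⁻¹ = f (p u).2 / f (p u).1 := by
          rw [eq_div_iff hfa, hinvf]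
        rw [heq2, map_div₀, div_le_one₀ (zero_lt_iff.mpr ((Valuation.ne_zero_iff _).mpr hfa))]
        exact h3
      obtain ⟨s, hsv⟩ := (val_le_one_iff_exists _).mp hval
      have hmem : s ∈ refSubring f := ⟨(p u).2, (p u).1, hfa, by rw [hsv, hinvf]⟩
      refine isUnit_iff_exists_inv.mpr ⟨⟨s, hmem⟩, Subtype.ext ?_⟩
      show (u : V) * s = 1
      apply IsFractionRing.injective V (FractionRing V)
      rw [map_mul, map_one, hsv, mul_inv_cancel₀ halgu]
    have hβcompat : β.comp (algebraMap R ↥(refSubring f)) = algebraMap R W := by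
      ext r
      apply injW
      rw [RingHom.comp_apply, hβ]
      have hwit2 : algebraMap V (FractionRing V)
          ((algebraMap R ↥(refSubring f) r : ↥(refSubring f)) : V) * f 1 =
          f (algebraMap R A r) := by
        rw [map_one, mul_one]
        exact (RingHom.congr_fun hf r).symm
      have h4 := Φspec (algebraMap R ↥(refSubring f) r) (algebraMap R A r) 1 (by simp) hwit2
      rw [map_one, mul_one] at h4
      rw [h4]
      exact RingHom.congr_fun hg r
    obtain ⟨βhat, hβhat_alg⟩ : ∃ βh : FractionRing ↥(refSubring f) →+* FractionRing W,
        ∀ u : ↥(refSubring f),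
          βh (algebraMap ↥(refSubring f) (FractionRing ↥(refSubring f)) u) =
            algebraMap W (FractionRing W) (β u) := by
      refine ⟨IsFractionRing.lift (g := (algebraMap W (FractionRing W)).comp β) ?_, ?_⟩
      · rw [RingHom.coe_comp]; exact injW.comp hβinj
      · intro u
        exact IsFractionRing.lift_algebraMap _ u
    have hβhat_h : ∀ a : A, βhat (refh f a) = g a := by
      intro a
      obtain ⟨n, d, hd, hnd⟩ := IsFractionRing.div_surjective (A := ↥(refSubring f)) (refh f a)
      have hd0 : d ≠ 0 := nonZeroDivisors.ne_zero hd
      have halgVd : algebraMap V (FractionRing V) (d : V) ≠ 0 := by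
        intro h0
        exact hd0 (Subtype.ext (IsFractionRing.injective V (FractionRing V) (by simp [h0])))
      have hαa : f a * algebraMap V (FractionRing V) (d : V) =
          algebraMap V (FractionRing V) (n : V) := by
        have h5 := refLift_refh f a
        rw [← hnd, map_div₀, refLift_algebraMap, refLift_algebraMap] at h5
        rw [← h5, div_mul_cancel₀ _ halgVd]
      have hfeq : f (a * (p d).1 * (p n).2) = f ((p n).1 * (p d).2) := by
        rw [map_mul, map_mul, map_mul, ← hp2 n, ← hp2 d]
        calc f a * (algebraMap V (FractionRing V) (d : V) * f (p d).2) * f (p n).2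
            = (f a * algebraMap V (FractionRing V) (d : V)) * f (p d).2 * f (p n).2 := by ring
          _ = algebraMap V (FractionRing V) (n : V) * f (p d).2 * f (p n).2 := by rw [hαa]
          _ = (algebraMap V (FractionRing V) (n : V) * f (p n).2) * f (p d).2 := by ring
      have hgeq := hfg _ _ hfeq
      rw [map_mul, map_mul, map_mul] at hgeq
      have key : g a * Φ d = Φ n := by
        simp only [hΦdef]
        rw [← mul_div_assoc, div_eq_div_iff (hgb d) (hgb n)]
        exact hgeq
      have hΦd : Φ d ≠ 0 := fun h0 => hd0 (Φzero d h0)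
      rw [← hnd, map_div₀, hβhat_alg, hβhat_alg, hβ, hβ, ← key]
      exact mul_div_cancel_right₀ _ hΦd
    refine ⟨{
      U := ↥(refSubring f)
      h := refh f
      h_compat := RingHom.ext fun r => (refLift f).injective (by
        rw [RingHom.comp_apply, RingHom.comp_apply, refLift_refh, refLift_algebraMap]
        exact RingHom.congr_fun hf r)
      α := (refSubring f).subtype
      β := β
      α_injective := Subtype.coe_injective
      β_injective := hβinj
      α_local := refSubring_subtype_isLocalHom f
      β_local := hβlocal
      α_compat := RingHom.ext fun r => rfl
      β_compat := hβcompat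
      αhat := refLift f
      βhat := βhat
      αhat_compat := RingHom.ext fun s => refLift_algebraMap f s
      βhat_compat := RingHom.ext fun u => by
        rw [RingHom.comp_apply, RingHom.comp_apply]
        exact hβhat_alg u
      αhat_h := refLift_comp_refh f
      βhat_h := RingHom.ext hβhat_h }⟩
  · rintro ⟨c⟩
    letI := c.commRingU
    letI := c.isDomainU
    letI := c.valuationRingU
    letI := c.algebraU
    have h1 := aux_isEquiv_comap c.α c.α_local c.αhat c.αhat_compat
    have h2 := aux_isEquiv_comap c.β c.β_local c.βhat c.βhat_compat
    have e1 : (ValuationRing.valuation V (FractionRing V)).comap f =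
        ((ValuationRing.valuation V (FractionRing V)).comap c.αhat).comap c.h := by
      rw [← Valuation.comap_comp, c.αhat_h]
    have e2 : (ValuationRing.valuation W (FractionRing W)).comap g =
        ((ValuationRing.valuation W (FractionRing W)).comap c.βhat).comap c.h := by
      rw [← Valuation.comap_comp, c.βhat_h]
    rw [e1, e2]
    exact (h1.comap c.h).trans ((h2.comap c.h).symm)
end

section
/- Let R be a commutative ring, A a commutative R-algebra, Γ a linearly ordered commutative group with zero, and v : Valuation A Γ a valuation such that v (algebraMap R A r) ≤ 1 for every r : R. Let p := Valuation.supp v (a prime ideal of A), and let q : A →+* FractionRing (A ⧸ p) be the composite of the quotient map A → A ⧸ p with the embedding of the domain A ⧸ p into its fraction field. Then there exists a valuation subring 𝒪 of FractionRing (A ⧸ p) such that q (algebraMap R A r) ∈ 𝒪 for every r : R, and the valuation 𝒪.valuation pulled back along q (Valuation.comap) is equivalent (Valuation.IsEquiv) to v. -/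
/-- Every valuation `v` on a commutative `R`-algebra `A` which is bounded by `1` on (the image
of) `R` arises, up to equivalence, from a valuation subring of the fraction field of
`A ⧸ supp v` containing the image of `R`. -/
theorem exists_valuationSubring_comap_isEquiv
    {R A : Type*} [CommRing R] [CommRing A] [Algebra R A]
    {Γ : Type*} [LinearOrderedCommGroupWithZero Γ]
    (v : Valuation A Γ) (hv : ∀ r : R, v (algebraMap R A r) ≤ 1) :
    ∃ 𝒪 : ValuationSubring (FractionRing (A ⧸ v.supp)),
      (∀ r : R,
        ((algebraMap (A ⧸ v.supp) (FractionRing (A ⧸ v.supp))).comp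
          (Ideal.Quotient.mk v.supp)) (algebraMap R A r) ∈ 𝒪) ∧
      (𝒪.valuation.comap
        ((algebraMap (A ⧸ v.supp) (FractionRing (A ⧸ v.supp))).comp
          (Ideal.Quotient.mk v.supp))).IsEquiv v := by
  set p := v.supp with hp
  let v' : Valuation (A ⧸ p) Γ := v.onQuot le_rfl
  have hS : nonZeroDivisors (A ⧸ p) ≤ v'.supp.primeCompl := by
    intro x hx
    have h0 : v'.supp = 0 := Valuation.supp_quot_supp v
    simp only [Ideal.primeCompl, Submonoid.mem_mk, Subsemigroup.mem_mk, Set.mem_compl_iff,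
      SetLike.mem_coe, h0]
    intro hx0
    exact (nonZeroDivisors.ne_zero hx) (by simpa using hx0)
  let w := v'.extendToLocalization hS (FractionRing (A ⧸ p))
  have hwq : ∀ a : A,
      w (((algebraMap (A ⧸ p) (FractionRing (A ⧸ p))).comp (Ideal.Quotient.mk p)) a) = v a := by
    intro a
    have := v'.extendToLocalization_apply_map_apply hS (FractionRing (A ⧸ p))
      (Ideal.Quotient.mk p a)
    rw [RingHom.comp_apply]; rw [this]; rfl
  refine ⟨w.valuationSubring, ?_, ?_⟩
  · intro r
    rw [Valuation.mem_valuationSubring_iff, hwq]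
    exact hv r
  · have h1 : (w.valuationSubring.valuation.comap
        ((algebraMap (A ⧸ p) (FractionRing (A ⧸ p))).comp
          (Ideal.Quotient.mk p))).IsEquiv
        (w.comap ((algebraMap (A ⧸ p) (FractionRing (A ⧸ p))).comp (Ideal.Quotient.mk p))) :=
      Valuation.IsEquiv.comap _ (Valuation.isEquiv_valuation_valuationSubring w).symm
    refine h1.trans (Valuation.IsEquiv.of_eq ?_)
    ext a
    exact hwq a
end

section
/- Let V and W be integral domains which are valuation rings, and let π : V →+* W be an injective local ring homomorphism. Let ĝ : FractionRing V →+* FractionRing W be a ring homomorphism satisfying ĝ ∘ algebraMap V (FractionRing V) = algebraMap W (FractionRing W) ∘ π. Then the pullback along ĝ of the canonical valuation of W on FractionRing W is equivalent (Valuation.IsEquiv) to the canonical valuation of V on FractionRing V. Consequently, for every commutative ring A and every ring homomorphism f : A →+* FractionRing V, the valuations (ValuationRing.valuation V (FractionRing V)).comap f and (ValuationRing.valuation W (FractionRing W)).comap (ĝ.comp f) on A are equivalent. -/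
universe u

/-- If `π : V →+* W` is an injective local homomorphism of valuation rings and
`ĝ : Frac V →+* Frac W` is compatible with `π`, then the pullback along `ĝ` of the canonical
valuation of `W` is equivalent to the canonical valuation of `V`; consequently, for any
commutative ring `A` and any `f : A →+* Frac V`, the valuations obtained on `A` via `f` and via
`ĝ ∘ f` are equivalent. -/
theorem valuation_comap_isEquiv_of_injective_isLocalHom
    {V W : Type*} [CommRing V] [IsDomain V] [ValuationRing V]
    [CommRing W] [IsDomain W] [ValuationRing W]
    (π : V →+* W) (hπinj : Function.Injective π) (hπloc : IsLocalHom π)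
    (ghat : FractionRing V →+* FractionRing W)
    (hghat : ghat.comp (algebraMap V (FractionRing V)) =
      (algebraMap W (FractionRing W)).comp π) :
    ((ValuationRing.valuation W (FractionRing W)).comap ghat).IsEquiv
      (ValuationRing.valuation V (FractionRing V)) ∧
    ∀ (A : Type u) [CommRing A] (f : A →+* FractionRing V),
      ((ValuationRing.valuation V (FractionRing V)).comap f).IsEquiv
        ((ValuationRing.valuation W (FractionRing W)).comap (ghat.comp f)) := by
  have hcomm : ∀ v : V, ghat (algebraMap V (FractionRing V) v) =
      algebraMap W (FractionRing W) (π v) := fun v => RingHom.congr_fun hghat v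
  have key : ((ValuationRing.valuation W (FractionRing W)).comap ghat).IsEquiv
      (ValuationRing.valuation V (FractionRing V)) := by
    apply Valuation.isEquiv_of_val_le_one
    intro x
    rw [Valuation.comap_apply]
    constructor
    · intro hx
      by_contra hxV
      have hx1 : ¬ ∃ a : V, algebraMap V (FractionRing V) a = x := by
        rw [← ValuationRing.mem_integer_iff]
        exact hxV
      have hx0 : x ≠ 0 := by
        rintro rfl
        exact hxV (by simp)
      have hxgt : 1 < (ValuationRing.valuation V (FractionRing V)) x := lt_of_not_ge hxV
      -- x⁻¹ ∈ V
      have hinvle : (ValuationRing.valuation V (FractionRing V)) x⁻¹ ≤ 1 := by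
        rw [map_inv₀]
        exact inv_le_one_of_one_le₀ hxgt.le
      obtain ⟨v, hv⟩ := (ValuationRing.mem_integer_iff V (FractionRing V) x⁻¹).mp hinvle
      -- v is a nonunit
      have hvnon : ¬ IsUnit v := by
        rintro ⟨u, rfl⟩
        apply hx1
        refine ⟨(↑u⁻¹ : V), ?_⟩
        have h1 : algebraMap V (FractionRing V) ↑u⁻¹ * x⁻¹ = 1 := by
          rw [← hv, ← map_mul, ← Units.val_mul, inv_mul_cancel, Units.val_one, map_one]
        have := congrArg (· * x) h1
        simpa [mul_assoc, inv_mul_cancel₀ hx0] using this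
      -- ghat x ∈ W
      obtain ⟨w, hw⟩ := (ValuationRing.mem_integer_iff W (FractionRing W) (ghat x)).mp hx
      have hmul : ghat x * ghat x⁻¹ = 1 := by
        rw [← map_mul, mul_inv_cancel₀ hx0, map_one]
      rw [← hw, ← hv, hcomm, ← map_mul] at hmul
      have h2 : w * π v = 1 := by
        apply IsFractionRing.injective W (FractionRing W)
        rw [map_one]; exact hmul
      have : IsUnit (π v) := IsUnit.of_mul_eq_one _ (by rw [mul_comm]; exact h2)
      exact hvnon (hπloc.map_nonunit v this)
    · intro hxle
      obtain ⟨v, hv⟩ := (ValuationRing.mem_integer_iff V (FractionRing V) x).mp hxle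
      rw [← hv, hcomm]
      exact (ValuationRing.mem_integer_iff W (FractionRing W) _).mpr ⟨π v, rfl⟩
  refine ⟨key, fun A _ f => ?_⟩
  rw [Valuation.comap_comp]
  exact (key.comap f).symm
end

section
/- Let V and W be integral domains which are valuation rings, and let f : V →+* W be a ring homomorphism; regard W as a V-algebra (hence a V-module) via f. Then W is faithfully flat over V (Module.FaithfullyFlat V W) if and only if f is injective and local (Function.Injective f and IsLocalHom f). -/
open TensorProduct

/-- Every element of `span {a} ⊗ M` is a pure tensor with left factor `a`. -/
lemma exists_tmul_of_span_singleton {R M : Type*} [CommRing R] [AddCommGroup M] [Module R M]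
    (a : R) (ha : a ∈ Ideal.span {a}) (x : (Ideal.span {a} : Ideal R) ⊗[R] M) :
    ∃ w : M, x = (⟨a, ha⟩ : Ideal.span {a}) ⊗ₜ[R] w := by
  induction x with
  | zero => exact ⟨0, by simp⟩
  | tmul i w =>
    obtain ⟨i, hi⟩ := i
    obtain ⟨r, rfl⟩ := Ideal.mem_span_singleton'.1 hi
    refine ⟨r • w, ?_⟩
    have : (⟨r * a, hi⟩ : Ideal.span {a}) = r • ⟨a, ha⟩ := by
      ext; simp [smul_eq_mul]
    rw [this, TensorProduct.smul_tmul]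
  | add x y hx hy =>
    obtain ⟨w₁, rfl⟩ := hx
    obtain ⟨w₂, rfl⟩ := hy
    exact ⟨w₁ + w₂, by rw [TensorProduct.tmul_add]⟩

/-- An injective map from a valuation ring to a domain gives a flat module structure. -/
lemma flat_of_injective_aux {V W : Type*} [CommRing V] [IsDomain V] [ValuationRing V]
    [CommRing W] [IsDomain W] (f : V →+* W) (hf : Function.Injective f) :
    letI : Algebra V W := f.toAlgebra
    Module.Flat V W := by
  letI : Algebra V W := f.toAlgebra
  rw [Module.Flat.iff_rTensor_injective]
  intro I hI
  obtain ⟨a, rfl⟩ := (IsBezout.isPrincipal_of_FG I hI).1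
  rw [injective_iff_map_eq_zero]
  intro x hx
  have ha : a ∈ Ideal.span {a} := Ideal.mem_span_singleton_self a
  obtain ⟨w, rfl⟩ := exists_tmul_of_span_singleton a ha x
  rw [LinearMap.rTensor_tmul] at hx
  have h0 : a • w = 0 := by
    have := congrArg (TensorProduct.lid V W) hx
    simpa using this
  have h0' : f a * w = 0 := by
    rw [← h0]; rfl
  rcases eq_or_ne a 0 with rfl | hne
  · have : (⟨(0 : V), ha⟩ : Ideal.span {(0 : V)}) = 0 := rfl
    rw [this, TensorProduct.zero_tmul]
  · have hfa : f a ≠ 0 := fun h => hne (hf (by simpa using h))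
    have : w = 0 := by
      rcases mul_eq_zero.1 h0' with h | h
      · exact absurd h hfa
      · exact h
    rw [this, TensorProduct.tmul_zero]

/-- A ring homomorphism between valuation rings is faithfully flat (for the module structure it
induces) if and only if it is injective and local. -/
theorem faithfullyFlat_iff_injective_and_isLocalHom
    {V W : Type*} [CommRing V] [IsDomain V] [ValuationRing V]
    [CommRing W] [IsDomain W] [ValuationRing W] (f : V →+* W) :
    letI : Algebra V W := f.toAlgebra
    (Module.FaithfullyFlat V W ↔ (Function.Injective f ∧ IsLocalHom f)) := by
  letI : Algebra V W := f.toAlgebra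
  have halg : algebraMap V W = f := rfl
  constructor
  · intro ff
    constructor
    · -- injectivity
      rw [RingHom.injective_iff_ker_eq_bot]
      by_contra hker
      haveI : Nontrivial (RingHom.ker f) :=
        Submodule.nontrivial_iff_ne_bot.2 hker
      haveI : Nontrivial ((RingHom.ker f) ⊗[V] W) :=
        Module.FaithfullyFlat.rTensor_nontrivial V W (RingHom.ker f)
      obtain ⟨x, y, hxy⟩ := exists_pair_ne ((RingHom.ker f) ⊗[V] W)
      have hinj : Function.Injective
          (LinearMap.rTensor W (RingHom.ker f : Ideal V).subtype) :=
        Module.Flat.iff_rTensor_injective'.1 ff.toFlat _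
      have hzero : ∀ z : (RingHom.ker f) ⊗[V] W,
          LinearMap.rTensor W (RingHom.ker f : Ideal V).subtype z = 0 := by
        intro z
        induction z with
        | zero => simp
        | tmul a w =>
          obtain ⟨a, haker⟩ := a
          rw [LinearMap.rTensor_tmul]
          have : (Ideal.span {(1 : V)} : Ideal V) = ⊤ := by simp
          have haw : a • w = 0 := by
            show f a * w = 0
            rw [RingHom.mem_ker.1 haker, zero_mul]
          calc ((RingHom.ker f : Ideal V).subtype ⟨a, haker⟩) ⊗ₜ[V] w
              = (a • (1:V)) ⊗ₜ[V] w := by simp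
            _ = (1:V) ⊗ₜ[V] (a • w) := TensorProduct.smul_tmul a 1 w
            _ = 0 := by rw [haw, TensorProduct.tmul_zero]
        | add u v hu hv => rw [map_add, hu, hv, add_zero]
      exact hxy (hinj ((hzero x).trans (hzero y).symm))
    · -- locality
      constructor
      intro a hu
      by_contra h
      have ham : a ∈ IsLocalRing.maximalIdeal V := h
      have hne := ff.submodule_ne_top (IsLocalRing.maximalIdeal.isMaximal V)
      apply hne
      rw [Ideal.smul_top_eq_map, halg]
      have : Ideal.map f (IsLocalRing.maximalIdeal V) = ⊤ :=
        Ideal.eq_top_of_isUnit_mem _ (Ideal.mem_map_of_mem f ham) hu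
      rw [this]
      rfl
  · rintro ⟨hinj, hloc⟩
    haveI := flat_of_injective_aux f hinj
    refine ⟨fun m hm hcontra => ?_⟩
    rw [IsLocalRing.eq_maximalIdeal hm] at hcontra
    rw [Ideal.smul_top_eq_map, halg] at hcontra
    have hmap : Ideal.map f (IsLocalRing.maximalIdeal V) = ⊤ := by
      rwa [← Submodule.restrictScalars_inj V W W]
    have hle : Ideal.map f (IsLocalRing.maximalIdeal V) ≤ IsLocalRing.maximalIdeal W := by
      rw [Ideal.map_le_iff_le_comap]
      intro a ha
      exact fun hu => ha (hloc.map_nonunit a hu)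
    rw [hmap] at hle
    exact (IsLocalRing.maximalIdeal.isMaximal W).ne_top (top_le_iff.1 hle)
end

section
/- Let A be a commutative ring and p a prime ideal of A. Set K := FractionRing (A ⧸ p) and let q : A →+* K be the composite of the quotient map A → A ⧸ p with the embedding of the domain A ⧸ p into its fraction field. Let v : Valuation K Γ₁ and w : Valuation K Γ₂ be valuations on the field K (with values in linearly ordered commutative groups with zero Γ₁, Γ₂). If the pullbacks v.comap q and w.comap q are equivalent valuations on A (Valuation.IsEquiv), then v and w are equivalent valuations on K. -/
lemma valuation_mul_le_iff_aux {K Γ : Type*} [Field K] [LinearOrderedCommGroupWithZero Γ]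
    (u : Valuation K Γ) {x y s t : K} (hs : s ≠ 0) (ht : t ≠ 0) :
    u x ≤ u y ↔ u (x * s * t) ≤ u (y * t * s) := by
  have hus : u s ≠ 0 := u.ne_zero_iff.mpr hs
  have hut : u t ≠ 0 := u.ne_zero_iff.mpr ht
  simp only [map_mul]
  rw [mul_right_comm (u y)]
  constructor
  · intro hle
    exact mul_le_mul_left (mul_le_mul_left hle _) _
  · intro hle
    have h1 := le_of_mul_le_mul_right hle (lt_of_le_of_ne zero_le' (Ne.symm hut))
    exact le_of_mul_le_mul_right h1 (lt_of_le_of_ne zero_le' (Ne.symm hus))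

/-- A valuation on `K = Frac(A ⧸ p)` is determined up to equivalence by its pullback to `A`:
if the pullbacks of two valuations along `q : A → Frac(A ⧸ p)` are equivalent, then the
valuations themselves are equivalent. -/
theorem valuation_isEquiv_of_comap_isEquiv
    {A : Type*} [CommRing A] (p : Ideal A) [p.IsPrime]
    {Γ₁ Γ₂ : Type*} [LinearOrderedCommGroupWithZero Γ₁] [LinearOrderedCommGroupWithZero Γ₂]
    (v : Valuation (FractionRing (A ⧸ p)) Γ₁) (w : Valuation (FractionRing (A ⧸ p)) Γ₂)
    (h : (v.comap ((algebraMap (A ⧸ p) (FractionRing (A ⧸ p))).comp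
        (Ideal.Quotient.mk p))).IsEquiv
      (w.comap ((algebraMap (A ⧸ p) (FractionRing (A ⧸ p))).comp (Ideal.Quotient.mk p)))) :
    v.IsEquiv w := by
  set K := FractionRing (A ⧸ p)
  set q : A →+* K :=
    (algebraMap (A ⧸ p) K).comp (Ideal.Quotient.mk p) with hq
  intro x y
  obtain ⟨a, s, hs, hx⟩ := @IsFractionRing.div_surjective (A ⧸ p) _ K _ _ _ x
  obtain ⟨b, t, ht, hy⟩ := @IsFractionRing.div_surjective (A ⧸ p) _ K _ _ _ y
  have hsne : (algebraMap (A ⧸ p) K) s ≠ 0 :=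
    IsFractionRing.to_map_ne_zero_of_mem_nonZeroDivisors (K := K) hs
  have htne : (algebraMap (A ⧸ p) K) t ≠ 0 :=
    IsFractionRing.to_map_ne_zero_of_mem_nonZeroDivisors (K := K) ht
  obtain ⟨a', ha'⟩ := Ideal.Quotient.mk_surjective a
  obtain ⟨b', hb'⟩ := Ideal.Quotient.mk_surjective b
  obtain ⟨s', hs'⟩ := Ideal.Quotient.mk_surjective s
  obtain ⟨t', ht'⟩ := Ideal.Quotient.mk_surjective t
  have e1 : x * (algebraMap (A ⧸ p) K) s * (algebraMap (A ⧸ p) K) t = q (a' * t') := by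
    rw [← hx]
    simp only [hq, RingHom.comp_apply, map_mul, ha', ht']
    field_simp
  have e2 : y * (algebraMap (A ⧸ p) K) t * (algebraMap (A ⧸ p) K) s = q (b' * s') := by
    rw [← hy]
    simp only [hq, RingHom.comp_apply, map_mul, hb', hs']
    field_simp
  have h' := h (a' * t') (b' * s')
  simp only [Valuation.comap_apply] at h'
  rw [valuation_mul_le_iff_aux v hsne htne, valuation_mul_le_iff_aux w hsne htne, e1, e2]
  exact h'
end
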